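/- arXiv:math/0601198 — 3 statements merged into one kernel-verified Lean document; each statement's English description precedes it below -/
import Mathlib

section
/- Let f : ℝⁿ → ℝ be a C² function and set W = √(1+‖∇f‖²). If the mean curvature expression H_f = div(∇f/W) is a constant function on ℝⁿ, equal to a ∈ ℝ, then a = 0; that is, an entire graph of constant mean curvature over ℝⁿ is a minimal hypersurface. -/
open MeasureTheory

/-- The divergence of a vector field on Euclidean space: the trace of its derivative. -/
noncomputable def divergence {n : ℕ}
    (X : EuclideanSpace ℝ (Fin n) → EuclideanSpace ℝ (Fin n))
    (x : EuclideanSpace ℝ (Fin n)) : ℝ :=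
  LinearMap.trace ℝ (EuclideanSpace ℝ (Fin n)) (fderiv ℝ X x).toLinearMap

/-- `W = √(1 + ‖∇f‖²)`. -/
noncomputable def Wgraph {n : ℕ} (f : EuclideanSpace ℝ (Fin n) → ℝ)
    (x : EuclideanSpace ℝ (Fin n)) : ℝ :=
  Real.sqrt (1 + ‖gradient f x‖ ^ 2)

/-- The unnormalized mean curvature of the graph of `f`: `H_f = div (∇f / W)`. -/
noncomputable def meanCurvGraph {n : ℕ} (f : EuclideanSpace ℝ (Fin n) → ℝ)
    (x : EuclideanSpace ℝ (Fin n)) : ℝ :=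
  divergence (fun y => (Wgraph f y)⁻¹ • gradient f y) x

lemma trace_eq_sum_coord {N : ℕ}
    (T : EuclideanSpace ℝ (Fin N) →L[ℝ] EuclideanSpace ℝ (Fin N)) :
    LinearMap.trace ℝ _ T.toLinearMap = ∑ i, T (EuclideanSpace.single i 1) i := by
  rw [LinearMap.trace_eq_matrix_trace ℝ ((EuclideanSpace.basisFun (Fin N) ℝ).toBasis)]
  rw [Matrix.trace]
  simp [Matrix.diag, LinearMap.toMatrix_apply, EuclideanSpace.basisFun_apply]

lemma coord_le_norm {N : ℕ} (v : EuclideanSpace ℝ (Fin N)) (i : Fin N) : |v i| ≤ ‖v‖ := by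
  have := abs_real_inner_le_norm v (EuclideanSpace.single i (1:ℝ))
  simpa [EuclideanSpace.inner_single_right, EuclideanSpace.norm_single] using this

/-- An entire graph over `ℝⁿ` of constant mean curvature is minimal. -/
theorem stmt3 {n : ℕ} (f : EuclideanSpace ℝ (Fin n) → ℝ)
    (hf : ContDiff ℝ 2 f) (a : ℝ)
    (hH : ∀ x, meanCurvGraph f x = a) : a = 0 := by
  obtain _ | m := n
  · rw [← hH 0, meanCurvGraph, divergence,
      Subsingleton.elim ((fderiv ℝ (fun y => (Wgraph f y)⁻¹ • gradient f y) 0).toLinearMap) 0,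
      map_zero]
  set X : EuclideanSpace ℝ (Fin (m + 1)) → EuclideanSpace ℝ (Fin (m + 1)) :=
    fun y => (Wgraph f y)⁻¹ • gradient f y with hXdef
  have hWpos : ∀ y, 0 < Wgraph f y :=
    fun y => Real.sqrt_pos.2 (by positivity)
  have hX : ContDiff ℝ 1 X := by
    have hg : ContDiff ℝ 1 (gradient f) := by
      have h1 : ContDiff ℝ 1 (fderiv ℝ f) := hf.fderiv_right (by norm_num)
      have : gradient f = fun y => (InnerProductSpace.toDual ℝ _).symm (fderiv ℝ f y) := rfl
      rw [this]
      exact (InnerProductSpace.toDual ℝ _).symm.contDiff.comp h1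
    have hW : ContDiff ℝ 1 (Wgraph f) := by
      rw [contDiff_iff_contDiffAt]
      intro y
      exact (Real.contDiffAt_sqrt (x := 1 + ‖gradient f y‖ ^ 2) (by positivity)).comp y
        ((contDiff_const.add (hg.norm_sq (𝕜 := ℝ))).contDiffAt)
    exact (hW.inv (fun y => (hWpos y).ne')).smul hg
  have hXnorm : ∀ y, ‖X y‖ ≤ 1 := by
    intro y
    have hgle : ‖gradient f y‖ ≤ Wgraph f y := by
      rw [Wgraph, show (Real.sqrt (1 + ‖gradient f y‖ ^ 2)) = Real.sqrt (1 + ‖gradient f y‖ ^ 2) from rfl]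
      rw [show ‖gradient f y‖ = Real.sqrt (‖gradient f y‖ ^ 2) from
        (Real.sqrt_sq (norm_nonneg _)).symm]
      exact Real.sqrt_le_sqrt (by nlinarith [Real.sq_sqrt (by positivity : (0:ℝ) ≤ ‖gradient f y‖ ^ 2)])
    rw [hXdef]
    simp only [norm_smul, norm_inv, Real.norm_eq_abs, abs_of_pos (hWpos y)]
    rw [inv_mul_le_iff₀ (hWpos y), mul_one]
    exact hgle
  have hXdiff : Differentiable ℝ X := hX.differentiable one_ne_zero
  have hdiv : ∀ z, LinearMap.trace ℝ _ (fderiv ℝ X z).toLinearMap = a := by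
    intro z
    simpa [meanCurvGraph, divergence, hXdef] using hH z
  have key : ∀ R : ℝ, 0 < R → |a| * R ≤ (m + 1 : ℝ) := by
    intro R hR
    set lo : Fin (m + 1) → ℝ := fun _ => -R with hlo
    set hi : Fin (m + 1) → ℝ := fun _ => R with hhi
    have hle : lo ≤ hi := fun i => by simp only [hlo, hhi]; linarith
    set φ := EuclideanSpace.equiv (Fin (m + 1)) ℝ with hφ
    set F : (Fin (m + 1) → ℝ) → (Fin (m + 1) → ℝ) := fun y => φ (X (φ.symm y)) with hF
    set F' : (Fin (m + 1) → ℝ) → (Fin (m + 1) → ℝ) →L[ℝ] (Fin (m + 1) → ℝ) := fun y =>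
      ((φ : EuclideanSpace ℝ (Fin (m + 1)) →L[ℝ] (Fin (m + 1) → ℝ)).comp
        (fderiv ℝ X (φ.symm y))).comp
        (φ.symm : (Fin (m + 1) → ℝ) →L[ℝ] EuclideanSpace ℝ (Fin (m + 1))) with hF'
    have hFd : ∀ y, HasFDerivAt F (F' y) y := by
      intro y
      exact (φ.toContinuousLinearMap.hasFDerivAt.comp _
        ((hXdiff (φ.symm y)).hasFDerivAt.comp _ φ.symm.hasFDerivAt))
    have hsum : ∀ y, (∑ i, F' y (Pi.single i 1) i) = a := by
      intro y
      have h0 : ∀ i, F' y (Pi.single i 1) i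
          = fderiv ℝ X (φ.symm y) (EuclideanSpace.single i 1) i := fun i => rfl
      rw [Finset.sum_congr rfl (fun i _ => h0 i), ← trace_eq_sum_coord, hdiv]
    have hFc : ContinuousOn F (Set.Icc lo hi) :=
      (φ.continuous.comp ((hX.continuous).comp φ.symm.continuous)).continuousOn
    have hInt : IntegrableOn (fun x => ∑ i, F' x (Pi.single i 1) i) (Set.Icc lo hi) := by
      rw [show (fun x => ∑ i, F' x (Pi.single i 1) i) = fun _ => a from funext hsum]
      exact integrableOn_const (isCompact_Icc.measure_lt_top).ne
    have hdt := integral_divergence_of_hasFDerivAt_off_countable (a := lo) (b := hi) hle F F' ∅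
      Set.countable_empty hFc (fun x _ => hFd x) hInt
    have hLHS : (∫ x in Set.Icc lo hi, ∑ i, F' x (Pi.single i 1) i)
        = (2 * R) ^ (m + 1) * a := by
      rw [show (fun x => ∑ i, F' x (Pi.single i 1) i) = fun _ => a from funext hsum,
        setIntegral_const, measureReal_def, Real.volume_Icc_pi_toReal hle]
      simp only [hlo, hhi, smul_eq_mul, sub_neg_eq_add, Finset.prod_const, Finset.card_univ,
        Fintype.card_fin]
      ring_nf
    have hfacevol : ∀ i : Fin (m + 1),
        (volume (Set.Icc (lo ∘ i.succAbove) (hi ∘ i.succAbove))).toReal = (2 * R) ^ m := by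
      intro i
      rw [Real.volume_Icc_pi_toReal (fun j => by
        simp only [Function.comp_apply, hlo, hhi]; linarith)]
      simp only [Function.comp_apply, hlo, hhi, sub_neg_eq_add, Finset.prod_const,
        Finset.card_univ, Fintype.card_fin]
      ring_nf
    have hface : ∀ (i : Fin (m + 1)) (c : ℝ),
        |∫ x in Set.Icc (lo ∘ i.succAbove) (hi ∘ i.succAbove), F (i.insertNth c x) i|
          ≤ (2 * R) ^ m := by
      intro i c
      have hb := norm_setIntegral_le_of_norm_le_const_ae' (μ := volume)
        (s := Set.Icc (lo ∘ i.succAbove) (hi ∘ i.succAbove))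
        (f := fun x => F (i.insertNth c x) i) (C := 1)
        (isCompact_Icc.measure_lt_top)
        (Filter.Eventually.of_forall (fun x _ =>
          (coord_le_norm (X (φ.symm (i.insertNth c x))) i).trans (hXnorm _)))
      rw [Real.norm_eq_abs] at hb
      calc |∫ x in Set.Icc (lo ∘ i.succAbove) (hi ∘ i.succAbove), F (i.insertNth c x) i|
          ≤ 1 * (volume (Set.Icc (lo ∘ i.succAbove) (hi ∘ i.succAbove))).toReal := hb
        _ = (2 * R) ^ m := by rw [one_mul, hfacevol i]
    have h1 : |(2 * R) ^ (m + 1) * a| ≤ (m + 1 : ℝ) * (2 * (2 * R) ^ m) := by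
      rw [← hLHS, hdt]
      refine (Finset.abs_sum_le_sum_abs _ _).trans ?_
      rw [show ((m : ℝ) + 1) * (2 * (2 * R) ^ m)
          = ∑ _i : Fin (m + 1), 2 * (2 * R) ^ m by
        rw [Finset.sum_const, Finset.card_univ, Fintype.card_fin]; ring]
      refine Finset.sum_le_sum (fun i _ => ?_)
      calc |(∫ x in Set.Icc (lo ∘ i.succAbove) (hi ∘ i.succAbove), F (i.insertNth (hi i) x) i)
            - ∫ x in Set.Icc (lo ∘ i.succAbove) (hi ∘ i.succAbove), F (i.insertNth (lo i) x) i|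
          ≤ |∫ x in Set.Icc (lo ∘ i.succAbove) (hi ∘ i.succAbove), F (i.insertNth (hi i) x) i|
            + |∫ x in Set.Icc (lo ∘ i.succAbove) (hi ∘ i.succAbove), F (i.insertNth (lo i) x) i| :=
          abs_sub _ _
        _ ≤ (2 * R) ^ m + (2 * R) ^ m := add_le_add (hface i _) (hface i _)
        _ = 2 * (2 * R) ^ m := by ring
    have hpow : (0 : ℝ) < (2 * R) ^ m := by positivity
    have h2 : |a| * ((2 * R) ^ m * (2 * R)) ≤ (m + 1 : ℝ) * (2 * (2 * R) ^ m) := by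
      rw [abs_mul, abs_of_nonneg (by positivity : (0:ℝ) ≤ (2 * R) ^ (m + 1)), mul_comm,
        pow_succ] at h1
      exact h1
    nlinarith [abs_nonneg a]
  by_contra ha
  have hapos : 0 < |a| := abs_pos.2 ha
  have h := key (((m : ℝ) + 2) / |a|) (by positivity)
  rw [mul_comm, div_mul_cancel₀ _ hapos.ne'] at h
  linarith
end

section
/- Let η : ℝⁿ → ℝⁿ be a C¹ vector field with ‖η(x)‖ = 1 for every x ∈ ℝⁿ. If div η is a constant function on ℝⁿ, equal to a ∈ ℝ, then a = 0. In other words, if ℝⁿ is foliated by a transversally oriented codimension-one C² foliation all of whose leaves have the same constant mean curvature, then every leaf is minimal. -/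
open MeasureTheory

lemma abs_coord_le_norm {n : ℕ} (x : EuclideanSpace ℝ (Fin n)) (i : Fin n) : |x i| ≤ ‖x‖ := by
  rw [EuclideanSpace.norm_eq]
  refine (Real.le_sqrt (abs_nonneg _) (Finset.sum_nonneg fun j _ => sq_nonneg _)).mpr ?_
  rw [sq_abs]
  simp only [Real.norm_eq_abs, sq_abs]
  exact Finset.single_le_sum (f := fun j => x j ^ 2) (fun j _ => sq_nonneg _) (Finset.mem_univ i)

lemma trace_eq_sum {n : ℕ} (T : EuclideanSpace ℝ (Fin n) →L[ℝ] EuclideanSpace ℝ (Fin n)) :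
    LinearMap.trace ℝ (EuclideanSpace ℝ (Fin n)) T.toLinearMap
      = ∑ i, T (EuclideanSpace.single i 1) i := by
  rw [LinearMap.trace_eq_matrix_trace ℝ (EuclideanSpace.basisFun (Fin n) ℝ).toBasis]
  simp [Matrix.trace, Matrix.diag, LinearMap.toMatrix_apply, EuclideanSpace.basisFun_apply,
    EuclideanSpace.basisFun_repr]

/-- If `ℝⁿ` is foliated by a transversally oriented codimension-one foliation, with unit
normal field `η`, all of whose leaves have the same constant mean curvature `a = div η`,
then every leaf is minimal: `a = 0`. -/
theorem stmt4 {n : ℕ} (η : EuclideanSpace ℝ (Fin n) → EuclideanSpace ℝ (Fin n))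
    (hη : ContDiff ℝ 1 η) (hunit : ∀ x, ‖η x‖ = 1) (a : ℝ)
    (hdiv : ∀ x, divergence η x = a) : a = 0 := by
  rcases n with _ | m
  · exfalso
    have h0 := hunit 0
    have : η 0 = 0 := by ext i; exact i.elim0
    rw [this, norm_zero] at h0
    exact zero_ne_one h0
  set L : EuclideanSpace ℝ (Fin (m+1)) ≃L[ℝ] (Fin (m+1) → ℝ) :=
    EuclideanSpace.equiv (Fin (m+1)) ℝ with hL
  have hdη : ∀ y, HasFDerivAt η (fderiv ℝ η y) y := fun y =>
    (hη.differentiable one_ne_zero y).hasFDerivAt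
  set f : (Fin (m+1) → ℝ) → (Fin (m+1) → ℝ) := fun x => L (η (L.symm x)) with hf
  set f' : (Fin (m+1) → ℝ) → (Fin (m+1) → ℝ) →L[ℝ] (Fin (m+1) → ℝ) := fun x =>
    (L : EuclideanSpace ℝ (Fin (m+1)) →L[ℝ] (Fin (m+1) → ℝ)).comp
      ((fderiv ℝ η (L.symm x)).comp
        (L.symm : (Fin (m+1) → ℝ) →L[ℝ] EuclideanSpace ℝ (Fin (m+1)))) with hf'
  have hfd : ∀ x, HasFDerivAt f (f' x) x := fun x =>
    (L.toContinuousLinearMap.hasFDerivAt).comp _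
      ((hdη (L.symm x)).comp x (L.symm.toContinuousLinearMap.hasFDerivAt))
  have hfc : Continuous f := L.continuous.comp (hη.continuous.comp L.symm.continuous)
  have key : ∀ x : Fin (m+1) → ℝ, ∑ i, f' x (Pi.single i 1) i = a := by
    intro x
    have h := hdiv (L.symm x)
    rw [divergence, trace_eq_sum] at h
    rw [← h]
    exact Finset.sum_congr rfl fun i _ => rfl
  have hbound : ∀ y : Fin (m+1) → ℝ, ∀ i, ‖f y i‖ ≤ 1 := by
    intro y i
    have h1 : f y i = (η (L.symm y)) i := rfl
    rw [h1, Real.norm_eq_abs]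
    calc |(η (L.symm y)) i| ≤ ‖η (L.symm y)‖ := abs_coord_le_norm _ i
    _ = 1 := hunit _
  have main : ∀ R : ℝ, 0 < R → |a| * (2*R) ≤ 2 * ((m:ℝ)+1) := by
    intro R hR
    set lo : Fin (m+1) → ℝ := fun _ => -R with hlo
    set hi : Fin (m+1) → ℝ := fun _ => R with hhi
    have hle : lo ≤ hi := fun i => by simp only [hlo, hhi]; linarith
    have hIcc_fin : volume (Set.Icc lo hi) < ⊤ := (isCompact_Icc).measure_lt_top
    have Hi : IntegrableOn (fun x => ∑ i, f' x (Pi.single i 1) i) (Set.Icc lo hi) := by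
      rw [funext key]
      exact integrableOn_const hIcc_fin.ne
    have DT := integral_divergence_of_hasFDerivAt_off_countable lo hi hle f f' ∅
      Set.countable_empty hfc.continuousOn (fun x _ => hfd x) Hi
    have hLHS : (∫ x in Set.Icc lo hi, ∑ i, f' x (Pi.single i 1) i) = (2*R)^(m+1) * a := by
      rw [funext key, setIntegral_const, measureReal_def, Real.volume_Icc_pi_toReal hle, smul_eq_mul]
      congr 1
      simp only [hlo, hhi]
      rw [Finset.prod_const]
      norm_num
      ring
    -- bound each face integral
    have hface : ∀ (i : Fin (m+1)) (c : ℝ),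
        ‖∫ x in Set.Icc (lo ∘ i.succAbove) (hi ∘ i.succAbove), f (i.insertNth c x) i‖
          ≤ (2*R)^m := by
      intro i c
      have hle' : (lo ∘ i.succAbove) ≤ (hi ∘ i.succAbove) := fun j => hle (i.succAbove j)
      have hvol : (volume (Set.Icc (lo ∘ i.succAbove) (hi ∘ i.succAbove))).toReal = (2*R)^m := by
        rw [Real.volume_Icc_pi_toReal hle']
        simp only [hlo, hhi, Function.comp]
        rw [Finset.prod_const]
        norm_num
        ring
      calc ‖∫ x in Set.Icc (lo ∘ i.succAbove) (hi ∘ i.succAbove), f (i.insertNth c x) i‖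
          ≤ 1 * (volume (Set.Icc (lo ∘ i.succAbove) (hi ∘ i.succAbove))).toReal := by
            exact norm_setIntegral_le_of_norm_le_const ((isCompact_Icc).measure_lt_top)
              (fun x _ => hbound _ i)
      _ = (2*R)^m := by rw [one_mul, hvol]
    have hRHS : |∑ i : Fin (m+1),
        ((∫ x in Set.Icc (lo ∘ i.succAbove) (hi ∘ i.succAbove), f (i.insertNth (hi i) x) i) -
         (∫ x in Set.Icc (lo ∘ i.succAbove) (hi ∘ i.succAbove), f (i.insertNth (lo i) x) i))|
        ≤ ((m:ℝ)+1) * (2 * (2*R)^m) := by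
      calc _ ≤ ∑ i : Fin (m+1), |(∫ x in Set.Icc (lo ∘ i.succAbove) (hi ∘ i.succAbove),
            f (i.insertNth (hi i) x) i) -
         (∫ x in Set.Icc (lo ∘ i.succAbove) (hi ∘ i.succAbove), f (i.insertNth (lo i) x) i)| :=
          Finset.abs_sum_le_sum_abs _ _
      _ ≤ ∑ _i : Fin (m+1), 2 * (2*R)^m := by
          refine Finset.sum_le_sum fun i _ => ?_
          calc |_ - _| ≤ ‖(∫ x in Set.Icc (lo ∘ i.succAbove) (hi ∘ i.succAbove),
                f (i.insertNth (hi i) x) i)‖ +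
              ‖(∫ x in Set.Icc (lo ∘ i.succAbove) (hi ∘ i.succAbove), f (i.insertNth (lo i) x) i)‖ :=
              abs_sub _ _
          _ ≤ (2*R)^m + (2*R)^m := add_le_add (hface i _) (hface i _)
          _ = 2 * (2*R)^m := by ring
      _ = ((m:ℝ)+1) * (2 * (2*R)^m) := by
          rw [Finset.sum_const, Finset.card_univ, Fintype.card_fin]
          ring
    have heq : |a| * (2*R)^(m+1) ≤ ((m:ℝ)+1) * (2 * (2*R)^m) := by
      have hdt := DT
      rw [hLHS] at hdt
      calc |a| * (2*R)^(m+1) = |(2*R)^(m+1) * a| := by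
            rw [abs_mul, abs_of_nonneg (by positivity : (0:ℝ) ≤ (2*R)^(m+1))]; ring
      _ = _ := by rw [hdt]
      _ ≤ ((m:ℝ)+1) * (2 * (2*R)^m) := hRHS
    have hpow : (0:ℝ) < (2*R)^m := by positivity
    have : |a| * (2*R) * (2*R)^m ≤ (2 * ((m:ℝ)+1)) * (2*R)^m := by
      calc |a| * (2*R) * (2*R)^m = |a| * (2*R)^(m+1) := by ring
      _ ≤ ((m:ℝ)+1) * (2 * (2*R)^m) := heq
      _ = (2 * ((m:ℝ)+1)) * (2*R)^m := by ring
    exact le_of_mul_le_mul_right this hpow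
  -- conclude a = 0
  by_contra ha
  have habs : 0 < |a| := abs_pos.mpr ha
  set R := (2 * ((m:ℝ)+1) + 1) / (2 * |a|) with hr
  have hR : 0 < R := by positivity
  have := main R hR
  rw [hr] at this
  have h2 : |a| * (2 * ((2 * ((m:ℝ)+1) + 1) / (2 * |a|))) = 2 * ((m:ℝ)+1) + 1 := by
    field_simp
  rw [h2] at this
  linarith
end

section
/- Let f : ℝⁿ → ℝ be a C² function, and define W = √(1+‖∇f‖²), G(x) = Iₙ + ∇f(x) (∇f(x))ᵀ, A(x) = W(x)⁻¹ G(x)⁻¹ Hess f(x), and S(x) = (tr A(x))² − tr(A(x)²), the scalar curvature of the graph of f. If S is a constant function on ℝⁿ, equal to s with s ≥ 0, then s = 0; that is, an entire graph over ℝⁿ of constant nonnegative scalar curvature has zero scalar curvature. -/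
open MeasureTheory

/-- The Hessian matrix of second partial derivatives of `f`. -/
noncomputable def hessMatrix {n : ℕ} (f : EuclideanSpace ℝ (Fin n) → ℝ)
    (x : EuclideanSpace ℝ (Fin n)) : Matrix (Fin n) (Fin n) ℝ :=
  Matrix.of fun i j =>
    iteratedFDeriv ℝ 2 f x ![EuclideanSpace.single i 1, EuclideanSpace.single j 1]

/-- The induced metric `G = Iₙ + ∇f (∇f)ᵀ` of the graph of `f` in graph coordinates. -/
noncomputable def metricMatrix {n : ℕ} (f : EuclideanSpace ℝ (Fin n) → ℝ)
    (x : EuclideanSpace ℝ (Fin n)) : Matrix (Fin n) (Fin n) ℝ :=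
  1 + Matrix.of fun i j => gradient f x i * gradient f x j

/-- The shape operator `A = W⁻¹ G⁻¹ Hess f` of the graph of `f`. -/
noncomputable def shapeOp {n : ℕ} (f : EuclideanSpace ℝ (Fin n) → ℝ)
    (x : EuclideanSpace ℝ (Fin n)) : Matrix (Fin n) (Fin n) ℝ :=
  (Wgraph f x)⁻¹ • ((metricMatrix f x)⁻¹ * hessMatrix f x)

/-- The scalar curvature `S = (tr A)² − tr(A²)` of the graph of `f` in `ℝⁿ⁺¹`. -/
noncomputable def scalCurvGraph {n : ℕ} (f : EuclideanSpace ℝ (Fin n) → ℝ)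
    (x : EuclideanSpace ℝ (Fin n)) : ℝ :=
  (shapeOp f x).trace ^ 2 - (shapeOp f x * shapeOp f x).trace

set_option maxHeartbeats 1000000

section MatrixAux

variable {m : Type*} [Fintype m] [DecidableEq m]

lemma aux_rank_one_inv (v : m → ℝ) :
    (1 + Matrix.of (fun i j => v i * v j) : Matrix m m ℝ)⁻¹
      = 1 - (1 + ∑ k, v k ^ 2)⁻¹ • Matrix.of (fun i j => v i * v j) := by
  have hq : (0:ℝ) < 1 + ∑ k, v k ^ 2 := by positivity
  apply Matrix.inv_eq_right_inv
  have hPP : (Matrix.of (fun i j => v i * v j) : Matrix m m ℝ) * Matrix.of (fun i j => v i * v j)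
      = (∑ k, v k ^ 2) • Matrix.of (fun i j => v i * v j) := by
    ext i j
    simp only [Matrix.mul_apply, Matrix.of_apply, Matrix.smul_apply, smul_eq_mul,
      Finset.sum_mul, Finset.mul_sum]
    apply Finset.sum_congr rfl
    intro k _
    ring
  set P : Matrix m m ℝ := Matrix.of (fun i j => v i * v j) with hP
  set c : ℝ := (1 + ∑ k, v k ^ 2)⁻¹ with hc
  have hcq : c * (1 + ∑ k, v k ^ 2) = 1 := inv_mul_cancel₀ hq.ne'
  have hcoeff : (1 : ℝ) - c - c * (∑ k, v k ^ 2) = 0 := by linear_combination -hcq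
  have expand : (1 + P) * (1 - c • P) = 1 + ((1 : ℝ) - c - c * (∑ k, v k ^ 2)) • P := by
    rw [Matrix.add_mul, Matrix.one_mul, Matrix.mul_sub, Matrix.mul_one, Matrix.mul_smul, hPP]
    module
  rw [expand, hcoeff, zero_smul, add_zero]

lemma aux_posdef_metric (v : m → ℝ) :
    (1 + Matrix.of (fun i j => v i * v j) : Matrix m m ℝ).PosDef := by
  apply Matrix.PosDef.add_posSemidef Matrix.PosDef.one
  refine Matrix.PosSemidef.of_dotProduct_mulVec_nonneg ?_ ?_
  · ext i j
    simp [Matrix.conjTranspose_apply, mul_comm]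
  · intro x
    have h : dotProduct (star x) ((Matrix.of (fun i j => v i * v j) : Matrix m m ℝ).mulVec x)
        = (∑ i, v i * x i) ^ 2 := by
      simp only [dotProduct, Matrix.mulVec, dotProduct, Matrix.of_apply, star_trivial]
      rw [sq, Finset.sum_mul]
      apply Finset.sum_congr rfl
      intro i _
      rw [Finset.mul_sum, Finset.mul_sum]
      apply Finset.sum_congr rfl
      intro j _
      ring
    rw [h]
    positivity

lemma aux_trace_sq_nonneg {B H : Matrix m m ℝ} (hB : B.PosDef) (hH : H.IsHermitian) :
    0 ≤ ((B⁻¹ * H) * (B⁻¹ * H)).trace := by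
  have hBi : (B⁻¹).PosDef := hB.inv
  set R := (open scoped MatrixOrder in CFC.sqrt B⁻¹) with hRdef
  have hRR : R * R = B⁻¹ := by
    open scoped MatrixOrder in exact CFC.sqrt_mul_sqrt_self _ hBi.posSemidef.nonneg
  have hRH : R.IsHermitian := by
    open scoped MatrixOrder in exact (Matrix.nonneg_iff_posSemidef.mp (CFC.sqrt_nonneg _)).1
  set K := R * H * R with hK
  have hKH : K.IsHermitian := by
    rw [hK, Matrix.IsHermitian, Matrix.conjTranspose_mul, Matrix.conjTranspose_mul, hRH, hH]
    rw [Matrix.mul_assoc]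
  have h0 : (B⁻¹ * H) * (B⁻¹ * H) = R * (R * (H * (R * (R * H)))) := by
    rw [← hRR]; simp only [Matrix.mul_assoc]
  have h1 : ((B⁻¹ * H) * (B⁻¹ * H)).trace = ((R * (H * (R * (R * H)))) * R).trace := by
    rw [h0, Matrix.trace_mul_comm]
  have h2 : (R * (H * (R * (R * H)))) * R = K * K := by
    simp only [hK, Matrix.mul_assoc]
  have hsym : ∀ i j, K j i = K i j := by
    intro i j
    have h4 := congrFun (congrFun hKH i) j
    simpa [Matrix.conjTranspose_apply] using h4
  have h3 : (K * K).trace = ∑ i, ∑ j, K i j * K i j := by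
    rw [Matrix.trace]
    apply Finset.sum_congr rfl
    intro i _
    simp only [Matrix.diag_apply, Matrix.mul_apply]
    exact Finset.sum_congr rfl fun j _ => by rw [hsym i j]
  rw [h1, h2, h3]
  exact Finset.sum_nonneg fun i _ => Finset.sum_nonneg fun j _ => mul_self_nonneg _

end MatrixAux

noncomputable def hess2 {n : ℕ} (f : EuclideanSpace ℝ (Fin n) → ℝ)
    (x : EuclideanSpace ℝ (Fin n)) : EuclideanSpace ℝ (Fin n) →L[ℝ] EuclideanSpace ℝ (Fin n) →L[ℝ] ℝ :=
  fderiv ℝ (fderiv ℝ f) x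

variable {n : ℕ} {f : EuclideanSpace ℝ (Fin n) → ℝ}

lemma aux_grad_apply (hf : ContDiff ℝ 2 f) (x : EuclideanSpace ℝ (Fin n)) (i : Fin n) :
    gradient f x i = fderiv ℝ f x (EuclideanSpace.single i 1) := by
  have h := ((hf.differentiable (by norm_num)) x).hasGradientAt
  have h2 : fderiv ℝ f x = InnerProductSpace.toDual ℝ _ (gradient f x) := by
    simp [gradient]
  rw [h2]
  rw [InnerProductSpace.toDual_apply_apply, EuclideanSpace.inner_single_right]; simp

lemma aux_hasFDerivAt_gradCoord (hf : ContDiff ℝ 2 f) (x : EuclideanSpace ℝ (Fin n)) (i : Fin n) :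
    HasFDerivAt (fun y => gradient f y i) ((hess2 f x).flip (EuclideanSpace.single i 1)) x := by
  have hd : HasFDerivAt (fderiv ℝ f) (hess2 f x) x :=
    ((hf.fderiv_right (m := 1) (by norm_num)).differentiable (by norm_num) x).hasFDerivAt
  have heq : (fun y => gradient f y i) = fun y => (fderiv ℝ f y) (EuclideanSpace.single i 1) :=
    funext fun y => aux_grad_apply hf y i
  rw [heq]
  have h3 := ((ContinuousLinearMap.apply ℝ ℝ (EuclideanSpace.single i 1)).hasFDerivAt.comp x hd)
  exact h3

lemma aux_hess_entry (hf : ContDiff ℝ 2 f) (x : EuclideanSpace ℝ (Fin n)) (i j : Fin n) :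
    hessMatrix f x i j = hess2 f x (EuclideanSpace.single i 1) (EuclideanSpace.single j 1) := by
  simp only [hessMatrix, Matrix.of_apply]
  rw [iteratedFDeriv_two_apply]
  simp [hess2]

lemma aux_hess_symm (hf : ContDiff ℝ 2 f) (x : EuclideanSpace ℝ (Fin n))
    (u v : EuclideanSpace ℝ (Fin n)) : hess2 f x u v = hess2 f x v u := by
  have h1 : ∀ y, HasFDerivAt f (fderiv ℝ f y) y := fun y =>
    ((hf.differentiable (by norm_num)) y).hasFDerivAt
  have h2 : HasFDerivAt (fderiv ℝ f) (hess2 f x) x :=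
    ((hf.fderiv_right (m := 1) (by norm_num)).differentiable (by norm_num) x).hasFDerivAt
  exact second_derivative_symmetric h1 h2 u v

lemma aux_cont_hess2 (hf : ContDiff ℝ 2 f) : Continuous fun x => hess2 f x :=
  (hf.fderiv_right (m := 1) (by norm_num)).continuous_fderiv (by norm_num)


variable {n : ℕ} {f : EuclideanSpace ℝ (Fin n) → ℝ}

lemma aux_norm_grad_sq (x : EuclideanSpace ℝ (Fin n)) :
    ‖gradient f x‖ ^ 2 = ∑ i, gradient f x i ^ 2 := by
  rw [EuclideanSpace.norm_eq, Real.sq_sqrt (by positivity)]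
  exact Finset.sum_congr rfl fun i _ => by rw [Real.norm_eq_abs, sq_abs]

lemma aux_W_sq (x : EuclideanSpace ℝ (Fin n)) :
    Wgraph f x ^ 2 = 1 + ∑ i, gradient f x i ^ 2 := by
  rw [Wgraph, Real.sq_sqrt (by positivity), aux_norm_grad_sq]

lemma aux_W_pos (x : EuclideanSpace ℝ (Fin n)) : 0 < Wgraph f x := by
  rw [Wgraph]; positivity

lemma aux_metric_inv (x : EuclideanSpace ℝ (Fin n)) :
    (metricMatrix f x)⁻¹
      = 1 - (Wgraph f x ^ 2)⁻¹ • Matrix.of (fun i j => gradient f x i * gradient f x j) := by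
  rw [aux_W_sq, metricMatrix]
  exact aux_rank_one_inv (fun k => gradient f x k)

lemma aux_trace_shape (x : EuclideanSpace ℝ (Fin n)) :
    (shapeOp f x).trace
      = (Wgraph f x)⁻¹ * ((hessMatrix f x).trace
          - (Wgraph f x ^ 2)⁻¹ *
            ∑ i, ∑ j, gradient f x i * gradient f x j * hessMatrix f x j i) := by
  rw [shapeOp, Matrix.trace_smul, aux_metric_inv, Matrix.sub_mul, Matrix.one_mul,
    Matrix.smul_mul, Matrix.trace_sub, Matrix.trace_smul, smul_eq_mul, smul_eq_mul]
  congr 2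

lemma aux_hess_herm (hf : ContDiff ℝ 2 f) (x : EuclideanSpace ℝ (Fin n)) :
    (hessMatrix f x).IsHermitian := by
  ext i j
  simp only [Matrix.conjTranspose_apply, star_trivial]
  rw [aux_hess_entry hf, aux_hess_entry hf]
  exact aux_hess_symm hf x _ _

lemma aux_trace_shape_sq_nonneg (hf : ContDiff ℝ 2 f) (x : EuclideanSpace ℝ (Fin n)) :
    0 ≤ (shapeOp f x * shapeOp f x).trace := by
  have h : shapeOp f x * shapeOp f x
      = ((Wgraph f x)⁻¹ * (Wgraph f x)⁻¹) • (((metricMatrix f x)⁻¹ * hessMatrix f x) *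
          ((metricMatrix f x)⁻¹ * hessMatrix f x)) := by
    rw [shapeOp, Matrix.smul_mul, Matrix.mul_smul, smul_smul]
  rw [h, Matrix.trace_smul, smul_eq_mul]
  have hpd : (metricMatrix f x).PosDef := aux_posdef_metric (fun k => gradient f x k)
  have := aux_trace_sq_nonneg hpd (aux_hess_herm hf x)
  have hw := aux_W_pos (f := f) x
  positivity

/-- The vector field `∇f/W` (coordinate `i`). -/
noncomputable def Xfield {n : ℕ} (f : EuclideanSpace ℝ (Fin n) → ℝ) (i : Fin n)
    (x : EuclideanSpace ℝ (Fin n)) : ℝ :=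
  gradient f x i * (Wgraph f x)⁻¹

/-- The derivative of `Xfield f i` at `x`. -/
noncomputable def XD {n : ℕ} (f : EuclideanSpace ℝ (Fin n) → ℝ) (i : Fin n)
    (x : EuclideanSpace ℝ (Fin n)) : EuclideanSpace ℝ (Fin n) →L[ℝ] ℝ :=
  gradient f x i • ((-(Wgraph f x ^ 2)⁻¹) • ((1 / (2 * Wgraph f x)) •
      (∑ j, (gradient f x j • (hess2 f x).flip (EuclideanSpace.single j 1)
           + gradient f x j • (hess2 f x).flip (EuclideanSpace.single j 1)))))
    + (Wgraph f x)⁻¹ • (hess2 f x).flip (EuclideanSpace.single i 1)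

lemma aux_W_eq (f : EuclideanSpace ℝ (Fin n) → ℝ) :
    Wgraph f = fun y => Real.sqrt (1 + ∑ j, gradient f y j * gradient f y j) := by
  funext y
  rw [Wgraph, aux_norm_grad_sq]
  congr 1
  congr 1
  exact Finset.sum_congr rfl fun j _ => sq (gradient f y j) ▸ (sq (gradient f y j)).symm ▸ rfl

lemma aux_hasFDerivAt_W (hf : ContDiff ℝ 2 f) (x : EuclideanSpace ℝ (Fin n)) :
    HasFDerivAt (Wgraph f) ((1 / (2 * Wgraph f x)) •
      (∑ j, (gradient f x j • (hess2 f x).flip (EuclideanSpace.single j 1)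
           + gradient f x j • (hess2 f x).flip (EuclideanSpace.single j 1)))) x := by
  have hq : HasFDerivAt (fun y => 1 + ∑ j, gradient f y j * gradient f y j)
      (∑ j, (gradient f x j • (hess2 f x).flip (EuclideanSpace.single j 1)
           + gradient f x j • (hess2 f x).flip (EuclideanSpace.single j 1))) x := by
    apply HasFDerivAt.const_add
    exact HasFDerivAt.fun_sum fun j _ =>
      (aux_hasFDerivAt_gradCoord hf x j).mul (aux_hasFDerivAt_gradCoord hf x j)
  have h1q : (0:ℝ) < 1 + ∑ j, gradient f x j * gradient f x j := by
    have : ∑ j, gradient f x j * gradient f x j = ∑ j, gradient f x j ^ 2 :=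
      Finset.sum_congr rfl fun j _ => (sq (gradient f x j)).symm
    rw [this]; positivity
  have h := hq.sqrt h1q.ne'
  rw [aux_W_eq f]
  convert h using 2

lemma aux_hasFDerivAt_X (hf : ContDiff ℝ 2 f) (x : EuclideanSpace ℝ (Fin n)) (i : Fin n) :
    HasFDerivAt (Xfield f i) (XD f i x) x := by
  have hWinv : HasFDerivAt (fun y => (Wgraph f y)⁻¹)
      ((-(Wgraph f x ^ 2)⁻¹) • ((1 / (2 * Wgraph f x)) •
        (∑ j, (gradient f x j • (hess2 f x).flip (EuclideanSpace.single j 1)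
             + gradient f x j • (hess2 f x).flip (EuclideanSpace.single j 1))))) x := by
    have := (hasDerivAt_inv (aux_W_pos (f := f) x).ne').comp_hasFDerivAt x
      (aux_hasFDerivAt_W hf x)
    exact this
  exact (aux_hasFDerivAt_gradCoord hf x i).mul hWinv

lemma aux_X_bound (x : EuclideanSpace ℝ (Fin n)) (i : Fin n) : |Xfield f i x| ≤ 1 := by
  have hW := aux_W_pos (f := f) x
  rw [Xfield, abs_mul, abs_inv, abs_of_pos hW, ← div_eq_mul_inv, div_le_one hW]
  have h2 : gradient f x i ^ 2 ≤ Wgraph f x ^ 2 := by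
    rw [aux_W_sq]
    have h3 := Finset.single_le_sum (f := fun j => gradient f x j ^ 2)
      (fun j _ => sq_nonneg _) (Finset.mem_univ i)
    simp only at h3
    linarith
  calc |gradient f x i| = Real.sqrt (gradient f x i ^ 2) := (Real.sqrt_sq_eq_abs _).symm
    _ ≤ Real.sqrt (Wgraph f x ^ 2) := Real.sqrt_le_sqrt h2
    _ = Wgraph f x := Real.sqrt_sq hW.le

lemma aux_XD_apply (hf : ContDiff ℝ 2 f) (x : EuclideanSpace ℝ (Fin n)) (i k : Fin n) :
    XD f i x (EuclideanSpace.single k 1)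
      = gradient f x i * (-(Wgraph f x ^ 2)⁻¹ * ((1 / (2 * Wgraph f x)) *
          (∑ j, (gradient f x j * hessMatrix f x k j + gradient f x j * hessMatrix f x k j))))
        + (Wgraph f x)⁻¹ * hessMatrix f x k i := by
  have he : ∀ a b : Fin n,
      hess2 f x (EuclideanSpace.single a 1) (EuclideanSpace.single b 1) = hessMatrix f x a b :=
    fun a b => (aux_hess_entry hf x a b).symm
  simp only [XD, ContinuousLinearMap.add_apply, ContinuousLinearMap.smul_apply,
    ContinuousLinearMap.coe_sum', Finset.sum_apply, ContinuousLinearMap.flip_apply,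
    smul_eq_mul, he]

lemma aux_hessM_symm (hf : ContDiff ℝ 2 f) (x : EuclideanSpace ℝ (Fin n)) (i j : Fin n) :
    hessMatrix f x i j = hessMatrix f x j i := by
  rw [aux_hess_entry hf, aux_hess_entry hf]
  exact aux_hess_symm hf x _ _

lemma aux_div_eq_trace (hf : ContDiff ℝ 2 f) (x : EuclideanSpace ℝ (Fin n)) :
    ∑ i, XD f i x (EuclideanSpace.single i 1) = (shapeOp f x).trace := by
  have hW := aux_W_pos (f := f) x
  have key : ∀ i, XD f i x (EuclideanSpace.single i 1)
      = (Wgraph f x)⁻¹ * hessMatrix f x i i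
        - ∑ j, (Wgraph f x)⁻¹ * ((Wgraph f x ^ 2)⁻¹ *
            (gradient f x i * (gradient f x j * hessMatrix f x i j))) := by
    intro i
    rw [aux_XD_apply hf]
    have h2 : ∑ j, (gradient f x j * hessMatrix f x i j + gradient f x j * hessMatrix f x i j)
        = 2 * ∑ j, gradient f x j * hessMatrix f x i j := by
      rw [Finset.sum_add_distrib, two_mul]
    rw [h2]
    have hsum2 : ∑ j, (Wgraph f x)⁻¹ * ((Wgraph f x ^ 2)⁻¹ *
            (gradient f x i * (gradient f x j * hessMatrix f x i j)))
        = (Wgraph f x)⁻¹ * ((Wgraph f x ^ 2)⁻¹ *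
            (gradient f x i * ∑ j, gradient f x j * hessMatrix f x i j)) := by
      rw [Finset.mul_sum, Finset.mul_sum, Finset.mul_sum]
    rw [hsum2]
    field_simp
    ring
  rw [Finset.sum_congr rfl fun i _ => key i, Finset.sum_sub_distrib]
  rw [aux_trace_shape, mul_sub]
  have htr : (hessMatrix f x).trace = ∑ i, hessMatrix f x i i := rfl
  congr 1
  · rw [htr, Finset.mul_sum]
  · simp only [Finset.mul_sum]
    apply Finset.sum_congr rfl
    intro i _
    apply Finset.sum_congr rfl
    intro j _
    rw [aux_hessM_symm hf x j i]
    ring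

lemma aux_cont_grad (hf : ContDiff ℝ 2 f) : Continuous (gradient f) := by
  have : gradient f = fun x => (InnerProductSpace.toDual ℝ _).symm (fderiv ℝ f x) := rfl
  rw [this]
  exact (LinearIsometryEquiv.continuous _).comp (hf.continuous_fderiv (by norm_num))

lemma aux_cont_gradCoord (hf : ContDiff ℝ 2 f) (i : Fin n) :
    Continuous fun x => gradient f x i := by
  have h : Continuous fun v : EuclideanSpace ℝ (Fin n) => v i :=
    (continuous_apply i).comp (PiLp.continuousLinearEquiv 2 ℝ _).continuous
  exact h.comp (aux_cont_grad hf)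

lemma aux_cont_W (hf : ContDiff ℝ 2 f) : Continuous (Wgraph f) :=
  (continuous_const.add (((aux_cont_grad hf).norm).pow 2)).sqrt

lemma aux_cont_hessEntry (hf : ContDiff ℝ 2 f) (i j : Fin n) :
    Continuous fun x => hessMatrix f x i j := by
  have h : Continuous fun x => hess2 f x (EuclideanSpace.single i 1) (EuclideanSpace.single j 1) :=
    ((aux_cont_hess2 hf).clm_apply continuous_const).clm_apply continuous_const
  exact h.congr fun x => (aux_hess_entry hf x i j).symm

lemma aux_cont_traceShape (hf : ContDiff ℝ 2 f) :
    Continuous fun x => (shapeOp f x).trace := by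
  have hWne : ∀ x, Wgraph f x ≠ 0 := fun x => (aux_W_pos x).ne'
  have hF : Continuous fun x => (Wgraph f x)⁻¹ * ((hessMatrix f x).trace
      - (Wgraph f x ^ 2)⁻¹ *
        ∑ i, ∑ j, gradient f x i * gradient f x j * hessMatrix f x j i) := by
    apply Continuous.mul ((aux_cont_W hf).inv₀ hWne)
    apply Continuous.sub
    · have : (fun x => (hessMatrix f x).trace) = fun x => ∑ i, hessMatrix f x i i := rfl
      rw [this]
      exact continuous_finset_sum _ fun i _ => aux_cont_hessEntry hf i i
    · apply Continuous.mul (((aux_cont_W hf).pow 2).inv₀ fun x => pow_ne_zero 2 (hWne x))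
      exact continuous_finset_sum _ fun i _ => continuous_finset_sum _ fun j _ =>
        (((aux_cont_gradCoord hf i).mul (aux_cont_gradCoord hf j)).mul
          (aux_cont_hessEntry hf j i))
  exact hF.congr fun x => (aux_trace_shape x).symm

lemma aux_cube {m : ℕ} (X : Fin (m+1) → (Fin (m+1) → ℝ) → ℝ)
    (X' : Fin (m+1) → (Fin (m+1) → ℝ) → ((Fin (m+1) → ℝ) →L[ℝ] ℝ))
    (hX : ∀ i x, HasFDerivAt (X i) (X' i x) x)
    (hXb : ∀ i x, |X i x| ≤ 1)
    (hcont : Continuous fun x => ∑ i, X' i x (Pi.single i 1))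
    {c : ℝ} (hc : 0 < c) (hdiv : ∀ x, c ≤ ∑ i, X' i x (Pi.single i 1)) : False := by
  set R : ℝ := (m + 2) / c with hR
  have hRpos : 0 < R := div_pos (by positivity) hc
  set a : Fin (m+1) → ℝ := fun _ => -R with ha
  set b : Fin (m+1) → ℝ := fun _ => R with hb
  have hle : a ≤ b := fun i => by simp only [ha, hb]; linarith
  have Hc : ∀ i, ContinuousOn (X i) (Set.Icc a b) := fun i =>
    (continuous_iff_continuousAt.2 fun x => (hX i x).differentiableAt.continuousAt).continuousOn
  have Hi : IntegrableOn (fun x => ∑ i, X' i x (Pi.single i 1)) (Set.Icc a b) :=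
    hcont.continuousOn.integrableOn_compact isCompact_Icc
  have heq := MeasureTheory.integral_divergence_of_hasFDerivAt_off_countable' a b hle X X'
    ∅ Set.countable_empty Hc (fun x _ i => hX i x) Hi
  have hIccvol : (volume (Set.Icc a b)).toReal = (2*R)^(m+1) := by
    rw [Real.volume_Icc_pi_toReal hle]
    simp only [ha, hb, sub_neg_eq_add, Finset.prod_const, Finset.card_univ, Fintype.card_fin]
    congr 1
    ring
  have hfin : volume (Set.Icc a b) ≠ ⊤ := (isCompact_Icc.measure_lt_top).ne
  have hlow : c * (2*R)^(m+1) ≤ ∫ x in Set.Icc a b, ∑ i, X' i x (Pi.single i 1) := by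
    rw [← hIccvol]
    have h := setIntegral_ge_of_const_le measurableSet_Icc hfin (fun x _ => hdiv x) Hi
    rw [smul_eq_mul, mul_comm, measureReal_def] at h
    exact h
  have hfacevol : ∀ i : Fin (m+1),
      (volume (Set.Icc (a ∘ i.succAbove) (b ∘ i.succAbove))).toReal = (2*R)^m := by
    intro i
    rw [show a ∘ i.succAbove = (fun _ : Fin m => (-R : ℝ)) from rfl,
      show b ∘ i.succAbove = (fun _ : Fin m => (R : ℝ)) from rfl]
    rw [Real.volume_Icc_pi_toReal (fun j => by dsimp; linarith)]
    simp only [sub_neg_eq_add, Finset.prod_const, Finset.card_univ, Fintype.card_fin]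
    congr 1
    ring
  have hfacefin : ∀ i : Fin (m+1),
      volume (Set.Icc (a ∘ i.succAbove) (b ∘ i.succAbove)) < ⊤ :=
    fun i => isCompact_Icc.measure_lt_top
  have hup : ∀ (i : Fin (m+1)) (g : (Fin m → ℝ) → (Fin (m+1) → ℝ)),
      |∫ x in Set.Icc (a ∘ i.succAbove) (b ∘ i.succAbove), X i (g x)| ≤ (2*R)^m := by
    intro i g
    have h := norm_setIntegral_le_of_norm_le_const (μ := volume) (hfacefin i)
      (f := fun x => X i (g x)) (C := 1) (fun x _ => by
        rw [Real.norm_eq_abs]; exact hXb i (g x))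
    rw [Real.norm_eq_abs, one_mul, measureReal_def, hfacevol i] at h
    exact h
  have hterm : ∀ i : Fin (m+1),
      ((∫ x in Set.Icc (a ∘ i.succAbove) (b ∘ i.succAbove), X i (i.insertNth (b i) x)) -
        ∫ x in Set.Icc (a ∘ i.succAbove) (b ∘ i.succAbove), X i (i.insertNth (a i) x))
        ≤ 2 * (2*R)^m := by
    intro i
    have h1 := hup i (fun y => i.insertNth (b i) y)
    have h2 := hup i (fun y => i.insertNth (a i) y)
    rw [abs_le] at h1 h2
    linarith [h1.1, h1.2, h2.1, h2.2]
  have hRHS : (∑ i : Fin (m+1),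
      ((∫ x in Set.Icc (a ∘ i.succAbove) (b ∘ i.succAbove), X i (i.insertNth (b i) x)) -
        ∫ x in Set.Icc (a ∘ i.succAbove) (b ∘ i.succAbove), X i (i.insertNth (a i) x)))
      ≤ (m+1) * (2 * (2*R)^m) := by
    have := Finset.sum_le_sum (fun i (_ : i ∈ Finset.univ) => hterm i)
    rw [Finset.sum_const, Finset.card_univ, Fintype.card_fin, nsmul_eq_mul] at this
    push_cast at this ⊢
    linarith
  rw [heq] at hlow
  have h2R : c * (2 * R) = 2 * (m + 2) := by
    field_simp [hR]
    rw [hR]; field_simp [hc.ne']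
  have hpow : (0:ℝ) < (2*R)^m := by positivity
  have hsplit : c * (2*R)^(m+1) = (c * (2*R)) * (2*R)^m := by ring
  have hle2 : c * (2*R)^(m+1) ≤ (m+1) * (2 * (2*R)^m) := hlow.trans hRHS
  rw [hsplit, h2R] at hle2
  nlinarith

/-- An entire graph over `ℝⁿ` of constant nonnegative scalar curvature has zero
scalar curvature (final assertion of Corollary 1.8 of the paper with `M = ℝⁿ`). -/
theorem stmt6 {n : ℕ} (f : EuclideanSpace ℝ (Fin n) → ℝ) (hf : ContDiff ℝ 2 f)
    (s : ℝ) (hs : 0 ≤ s) (hS : ∀ x, scalCurvGraph f x = s) : s = 0 := by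
  by_contra hne
  have hspos : 0 < s := lt_of_le_of_ne hs (Ne.symm hne)
  have htr2 : ∀ x, s ≤ (shapeOp f x).trace ^ 2 := by
    intro x
    have h1 := hS x
    rw [scalCurvGraph] at h1
    have h2 := aux_trace_shape_sq_nonneg hf x
    linarith
  have hc : 0 < Real.sqrt s := Real.sqrt_pos.2 hspos
  have habs : ∀ x, Real.sqrt s ≤ |(shapeOp f x).trace| := by
    intro x
    rw [← Real.sqrt_sq_eq_abs]
    exact Real.sqrt_le_sqrt (htr2 x)
  cases n with
  | zero =>
    have h0 : (shapeOp f 0).trace = 0 := by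
      simp [Matrix.trace]
    have h1 := habs 0
    rw [h0] at h1
    simp only [abs_zero] at h1
    linarith
  | succ m =>
    have hcont := aux_cont_traceShape hf
    have hne0 : ∀ x, (shapeOp f x).trace ≠ 0 := by
      intro x h0
      have h1 := habs x
      rw [h0, abs_zero] at h1
      linarith
    have hconst_sign : (∀ x, 0 < (shapeOp f x).trace) ∨ (∀ x, (shapeOp f x).trace < 0) := by
      by_cases hp : ∀ x, 0 < (shapeOp f x).trace
      · left; exact hp
      · right
        push_neg at hp
        obtain ⟨x1, hx1⟩ := hp
        have hx1' : (shapeOp f x1).trace < 0 := lt_of_le_of_ne hx1 (hne0 x1)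
        intro x
        rcases lt_or_gt_of_ne (hne0 x) with h | h
        · exact h
        · exfalso
          set φ : ℝ → ℝ := fun t => (shapeOp f (x + t • (x1 - x))).trace with hφ
          have hφc : Continuous φ := hcont.comp (by continuity)
          have h0 : φ 0 = (shapeOp f x).trace := by simp [hφ]
          have h1 : φ 1 = (shapeOp f x1).trace := by simp [hφ]
          have hmem : (0:ℝ) ∈ Set.Icc (φ 1) (φ 0) := by
            rw [h0, h1]; constructor <;> [linarith; linarith]
          have hsub := intermediate_value_Icc' (zero_le_one) hφc.continuousOn
          obtain ⟨t, _, ht⟩ := hsub hmem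
          exact hne0 _ ht
    obtain ⟨ε, hε1, hεsign⟩ : ∃ ε : ℝ, |ε| = 1 ∧
        ∀ x, Real.sqrt s ≤ ε * (shapeOp f x).trace := by
      rcases hconst_sign with hp | hn
      · refine ⟨1, abs_one, fun x => ?_⟩
        rw [one_mul]
        have h1 := habs x
        rwa [abs_of_pos (hp x)] at h1
      · refine ⟨-1, by norm_num, fun x => ?_⟩
        have h1 := habs x
        rw [abs_of_neg (hn x)] at h1
        linarith
    set e := PiLp.continuousLinearEquiv 2 ℝ (fun _ : Fin (m+1) => ℝ) with he
    have key : ∀ x : Fin (m+1) → ℝ,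
        ∑ i, ((ε • XD f i (e.symm x)).comp
          (e.symm : (Fin (m+1) → ℝ) →L[ℝ] EuclideanSpace ℝ (Fin (m+1)))) (Pi.single i 1)
          = ε * (shapeOp f (e.symm x)).trace := by
      intro x
      have hsingle : ∀ i : Fin (m+1),
          (e.symm : (Fin (m+1) → ℝ) →L[ℝ] EuclideanSpace ℝ (Fin (m+1))) (Pi.single i 1)
            = EuclideanSpace.single i 1 := fun i => rfl
      simp only [ContinuousLinearMap.coe_comp', Function.comp_apply,
        ContinuousLinearMap.smul_apply, smul_eq_mul, hsingle]
      rw [← Finset.mul_sum, aux_div_eq_trace hf]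
    apply aux_cube (m := m)
      (X := fun i x => ε * Xfield f i (e.symm x))
      (X' := fun i x => (ε • XD f i (e.symm x)).comp
        (e.symm : (Fin (m+1) → ℝ) →L[ℝ] EuclideanSpace ℝ (Fin (m+1))))
      ?_ ?_ ?_ hc ?_
    · intro i x
      have h1 := (aux_hasFDerivAt_X hf (e.symm x) i).const_mul ε
      exact h1.comp x (e.symm.hasFDerivAt)
    · intro i x
      rw [abs_mul, hε1, one_mul]
      exact aux_X_bound (e.symm x) i
    · have hc2 : Continuous fun x : Fin (m+1) → ℝ => ε * (shapeOp f (e.symm x)).trace :=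
        continuous_const.mul (hcont.comp e.symm.continuous)
      exact hc2.congr fun x => (key x).symm
    · intro x
      rw [key x]
      exact hεsign _
end
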